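/- Let n ≥ 1 and let U, V ∈ M_n(ℂ) with U invertible, Uᵀ V = Vᵀ U, and Vᵀ conj(U) − Uᵀ conj(V) = 2i·I. Then: (i) V U^{−1} is symmetric; (ii) the imaginary part of V U^{−1} equals (Uᵀ)^{−1} conj(U)^{−1} = (conj(U)^{−1})^* conj(U)^{−1}, which is Hermitian positive definite; (iii) setting Λ = −i V U^{−1}, one has Λ + conj(Λ) = 2 (Uᵀ)^{−1} conj(U)^{−1}. -/

import Mathlib

open Matrix
open scoped ComplexOrder

noncomputable section

/-- entrywise imaginary part of a complex matrix -/
def imMat {m : Type*} (M : Matrix m m ℂ) : Matrix m m ℝ := Matrix.of fun i j => (M i j).im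

/-- Let `U, V ∈ M_n(ℂ)` with `U` invertible, `Uᵀ V = Vᵀ U` and
`Vᵀ conj(U) − Uᵀ conj(V) = 2i·I`. Then (i) `V U⁻¹` is symmetric;
(ii) `Im (V U⁻¹) = (Uᵀ)⁻¹ conj(U)⁻¹ = (conj(U)⁻¹)^* conj(U)⁻¹`, which is Hermitian positive
definite; (iii) with `Λ = −i V U⁻¹`, `Λ + conj(Λ) = 2 (Uᵀ)⁻¹ conj(U)⁻¹`. -/
theorem statement_7 (n : ℕ) (hn : 1 ≤ n) (U V : Matrix (Fin n) (Fin n) ℂ)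
    (hU : IsUnit U)
    (h1 : Uᵀ * V = Vᵀ * U)
    (h2 : Vᵀ * U.map (fun z => (starRingEnd ℂ) z) - Uᵀ * V.map (fun z => (starRingEnd ℂ) z) =
      ((2 : ℂ) * Complex.I) • (1 : Matrix (Fin n) (Fin n) ℂ)) :
    (V * U⁻¹).IsSymm ∧
      (imMat (V * U⁻¹)).map (fun r => (r : ℂ)) =
        (Uᵀ)⁻¹ * (U.map (fun z => (starRingEnd ℂ) z))⁻¹ ∧
      (Uᵀ)⁻¹ * (U.map (fun z => (starRingEnd ℂ) z))⁻¹ =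
        ((U.map (fun z => (starRingEnd ℂ) z))⁻¹)ᴴ * (U.map (fun z => (starRingEnd ℂ) z))⁻¹ ∧
      ((Uᵀ)⁻¹ * (U.map (fun z => (starRingEnd ℂ) z))⁻¹).PosDef ∧
      (-(Complex.I)) • (V * U⁻¹) +
          ((-(Complex.I)) • (V * U⁻¹)).map (fun z => (starRingEnd ℂ) z) =
        (2 : ℂ) • ((Uᵀ)⁻¹ * (U.map (fun z => (starRingEnd ℂ) z))⁻¹) := by
  classical
  set c := (starRingEnd ℂ) with hc
  set Umc := U.map (fun z => c z) with hUmc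
  set S := V * U⁻¹ with hS
  set M := (Uᵀ)⁻¹ * Umc⁻¹ with hM
  have hdet : IsUnit U.det := (Matrix.isUnit_iff_isUnit_det U).mp hU
  have hUU : U * U⁻¹ = 1 := Matrix.mul_nonsing_inv U hdet
  have hmapmul : ∀ (A B : Matrix (Fin n) (Fin n) ℂ),
      (A * B).map (fun z => c z) = A.map (fun z => c z) * B.map (fun z => c z) := by
    intro A B
    ext i j
    simp [Matrix.map_apply, Matrix.mul_apply, map_sum]
  have hmc : Umc * (U⁻¹).map (fun z => c z) = 1 := by
    rw [hUmc, ← hmapmul, hUU]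
    ext i j
    simp only [Matrix.map_apply, Matrix.one_apply]
    split <;> simp
  have hinvmap : Umc⁻¹ = (U⁻¹).map (fun z => c z) := Matrix.inv_eq_right_inv hmc
  have hdetc : IsUnit Umc.det := by
    have h : Umc.det = c U.det := by rw [hUmc]; exact (RingHom.map_det c U).symm
    rw [h]; exact hdet.map c
  have hUmcinv : Umc * Umc⁻¹ = 1 := Matrix.mul_nonsing_inv Umc hdetc
  have hTdet : IsUnit Uᵀ.det := by rwa [Matrix.det_transpose]
  have hTT : (Uᵀ)⁻¹ * Uᵀ = 1 := Matrix.nonsing_inv_mul Uᵀ hTdet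
  -- (i) symmetry
  have hUtS : Uᵀ * S = Vᵀ := by
    rw [hS, ← mul_assoc, h1, mul_assoc, hUU, mul_one]
  have hA : (Uᵀ)⁻¹ * Vᵀ = S := by
    rw [← hUtS, ← mul_assoc, hTT, one_mul]
  have hsym : Sᵀ = S := by
    rw [hS, Matrix.transpose_mul, Matrix.transpose_nonsing_inv, hA]
  -- key identity
  have hScmap : S.map (fun z => c z) = V.map (fun z => c z) * Umc⁻¹ := by
    rw [hS, hmapmul, hinvmap]
  have hkey : S - S.map (fun z => c z) = ((2 : ℂ) * Complex.I) • M := by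
    have expand : (Uᵀ)⁻¹ * (Vᵀ * Umc - Uᵀ * V.map (fun z => c z)) * Umc⁻¹
        = S - S.map (fun z => c z) := by
      rw [Matrix.mul_sub, Matrix.sub_mul]
      congr 1
      · rw [← mul_assoc, hA, mul_assoc, hUmcinv, mul_one]
      · rw [← mul_assoc, hTT, one_mul, hScmap]
    rw [← expand, h2, hM, Matrix.mul_smul, Matrix.smul_mul, mul_one]
  -- (ii) imaginary part
  have hentry : ∀ i j, M i j = ((S i j).im : ℂ) := by
    intro i j
    have h := congrFun (congrFun hkey i) j
    have h' : S i j - c (S i j) = (2 * Complex.I) * M i j := by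
      simpa [Matrix.sub_apply, Matrix.map_apply, Matrix.smul_apply, smul_eq_mul] using h
    have hsub : S i j - c (S i j) = (2 * Complex.I) * ((S i j).im : ℂ) := by
      rw [hc, Complex.sub_conj]
      push_cast
      ring
    have h2I : (2 * Complex.I : ℂ) ≠ 0 := by
      simp [Complex.I_ne_zero]
    exact mul_left_cancel₀ h2I (h'.symm.trans hsub)
  have hii : (imMat S).map (fun r => (r : ℂ)) = M := by
    ext i j
    rw [Matrix.map_apply, hentry i j]
    simp [imMat]
  -- M = Aᴴ A
  have hUmcH : Umcᴴ = Uᵀ := by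
    ext i j
    simp [Matrix.conjTranspose_apply, Matrix.map_apply, hUmc, hc]
  have hAHA : M = (Umc⁻¹)ᴴ * Umc⁻¹ := by
    rw [hM, Matrix.conjTranspose_nonsing_inv, hUmcH]
  -- positive definiteness
  haveI : Invertible (Umc⁻¹) := Umc⁻¹.invertibleOfIsUnitDet (Umc.isUnit_nonsing_inv_det hdetc)
  have hposdef : M.PosDef := by
    rw [hAHA]
    refine Matrix.PosDef.of_dotProduct_mulVec_pos (Matrix.isHermitian_conjTranspose_mul_self _) fun x hx => ?_
    rw [← Matrix.mulVec_mulVec, Matrix.dotProduct_mulVec, Matrix.vecMul_conjTranspose, star_star]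
    refine Matrix.dotProduct_star_self_pos_iff.mpr ?_
    intro h
    apply hx
    apply Matrix.mulVec_injective_of_invertible Umc⁻¹
    simpa using h
  -- (iii)
  have hmapsmul : ((-(Complex.I)) • S).map (fun z => c z)
      = Complex.I • S.map (fun z => c z) := by
    ext i j
    simp [Matrix.map_apply, Matrix.smul_apply, smul_eq_mul, hc]
  have hiii : (-(Complex.I)) • S + ((-(Complex.I)) • S).map (fun z => c z)
      = (2 : ℂ) • M := by
    rw [hmapsmul]
    have hcomb : (-(Complex.I)) • S + Complex.I • S.map (fun z => c z)
        = (-(Complex.I)) • (S - S.map (fun z => c z)) := by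
      module
    rw [hcomb, hkey, smul_smul]
    congr 1
    have : Complex.I * Complex.I = -1 := Complex.I_mul_I
    ring_nf
    rw [Complex.I_sq]
    ring
  exact ⟨hsym, hii, hAHA, hposdef, hiii⟩

end
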